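/- Equip ℝ^{n+1}, with coordinates (x₀,…,x_n), with the Minkowski bilinear form ⟪x,y⟫ = −x₀y₀ + x₁y₁ + ⋯ + x_n y_n, and let Hⁿ = {x : ⟪x,x⟫ = −1, x₀ > 0}. Let A₁,…,A_{n+2} ∈ Hⁿ be in general position and α₁,…,α_{n+2} nonzero reals with Σᵢ αᵢAᵢ = 0. Suppose B₁,…,B_{n+2} : [0,1] → Hⁿ are continuous maps with Bᵢ(0) = Aᵢ satisfying, for all t ∈ [0,1], the tensegrity constraints of F_{n,1}: ⟪Bᵢ(t)−B_j(t), Bᵢ(t)−B_j(t)⟫ ≥ ⟪Aᵢ−A_j, Aᵢ−A_j⟫ whenever αᵢα_j < 0, and ⟪Bᵢ(t)−B_j(t), Bᵢ(t)−B_j(t)⟫ ≤ ⟪Aᵢ−A_j, Aᵢ−A_j⟫ whenever αᵢα_j > 0. Then ⟪Bᵢ(t)−B_j(t), Bᵢ(t)−B_j(t)⟫ = ⟪Aᵢ−A_j, Aᵢ−A_j⟫ for all i, j and all t ∈ [0,1]; i.e. F_{n,1} is rigid in hyperbolic space Hⁿ. -/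

import Mathlib

set_option maxHeartbeats 1000000


/-- The Minkowski bilinear form on `ℝ^{m+1}` with coordinates `(x₀, …, x_m)`:
`⟪x,y⟫ = −x₀y₀ + x₁y₁ + ⋯ + x_m y_m`. -/
def mink {m : ℕ} (x y : Fin (m + 1) → ℝ) : ℝ :=
  ∑ i, (if i = 0 then -(x i * y i) else x i * y i)

/-- The hyperboloid model of hyperbolic space: `⟪x,x⟫ = −1` and `x₀ > 0`. -/
def InHyperbolic {m : ℕ} (x : Fin (m + 1) → ℝ) : Prop :=
  mink x x = -1 ∧ 0 < x 0

namespace MinkAux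
variable {m : ℕ}

def minkB : (Fin (m + 1) → ℝ) →ₗ[ℝ] (Fin (m + 1) → ℝ) →ₗ[ℝ] ℝ :=
  LinearMap.mk₂ ℝ mink
    (by intro x x' y; unfold mink
        rw [← Finset.sum_add_distrib]
        refine Finset.sum_congr rfl fun i _ => ?_
        by_cases h : i = 0 <;> simp [h, Pi.add_apply] <;> ring)
    (by intro c x y; unfold mink
        rw [smul_eq_mul, Finset.mul_sum]
        refine Finset.sum_congr rfl fun i _ => ?_
        by_cases h : i = 0 <;> simp [h, Pi.smul_apply, smul_eq_mul] <;> ring)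
    (by intro x y y'; unfold mink
        rw [← Finset.sum_add_distrib]
        refine Finset.sum_congr rfl fun i _ => ?_
        by_cases h : i = 0 <;> simp [h, Pi.add_apply] <;> ring)
    (by intro c x y; unfold mink
        rw [smul_eq_mul, Finset.mul_sum]
        refine Finset.sum_congr rfl fun i _ => ?_
        by_cases h : i = 0 <;> simp [h, Pi.smul_apply, smul_eq_mul] <;> ring)

lemma mink_eq_minkB (x y : Fin (m + 1) → ℝ) : mink x y = minkB x y := rfl

lemma mink_comm (x y : Fin (m + 1) → ℝ) : mink x y = mink y x := by
  unfold mink; refine Finset.sum_congr rfl fun i _ => ?_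
  by_cases h : i = 0 <;> simp [h] <;> ring

lemma mink_sum_smul_left {ι : Type*} [Fintype ι] (a : ι → ℝ) (g : ι → (Fin (m + 1) → ℝ))
    (y : Fin (m + 1) → ℝ) :
    mink (∑ i, a i • g i) y = ∑ i, a i * mink (g i) y := by
  rw [mink_eq_minkB, map_sum]
  simp only [map_smul, LinearMap.smul_apply, LinearMap.sum_apply, smul_eq_mul]
  rfl

lemma mink_sum_smul_right {ι : Type*} [Fintype ι] (a : ι → ℝ) (g : ι → (Fin (m + 1) → ℝ))
    (y : Fin (m + 1) → ℝ) :
    mink y (∑ i, a i • g i) = ∑ i, a i * mink y (g i) := by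
  rw [mink_comm, mink_sum_smul_left]
  exact Finset.sum_congr rfl fun i _ => by rw [mink_comm]

lemma mink_expand (x y : Fin (m + 1) → ℝ) :
    mink (x - y) (x - y) = mink x x - 2 * mink x y + mink y y := by
  simp only [mink_eq_minkB, map_sub, LinearMap.sub_apply]
  have := mink_comm x y
  simp only [mink_eq_minkB] at this
  rw [this]; ring

lemma mink_zero_left (y : Fin (m + 1) → ℝ) : mink 0 y = 0 := by
  rw [mink_eq_minkB]; simp

lemma mink_single (w : Fin (m + 1) → ℝ) (j : Fin (m + 1)) :
    mink w (Pi.single j 1) = if j = 0 then -(w j) else w j := by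
  unfold mink
  rw [Finset.sum_eq_single j]
  · by_cases h : j = 0 <;> simp [h]
  · intro b _ hb
    by_cases h : b = 0 <;> simp [Pi.single_eq_of_ne hb]
  · simp

lemma mink_zero_right (y : Fin (m + 1) → ℝ) : mink y 0 = 0 := by
  rw [mink_comm, mink_zero_left]

lemma core {n : ℕ} (α β : Fin (n + 2) → ℝ) (P C : Fin (n + 2) → (Fin (n + 1) → ℝ))
    (hα : ∀ i, α i ≠ 0)
    (hP : ∑ i, α i • P i = 0)
    (hC : ∑ i, β i • C i = 0)
    (hsign : ∀ i j, 0 ≤ α i * α j * (mink (C i) (C j) - mink (P i) (P j)))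
    (hsmall : (∑ i, |β i - α i| / |α i|) * (n + 2) < 1) :
    ∀ i j, mink (C i) (C j) = mink (P i) (P j) := by
  classical
  set ω : Fin (n + 2) → Fin (n + 2) → ℝ :=
    fun i j => α i * α j * (mink (C i) (C j) - mink (P i) (P j)) with hω
  set E : ℝ := ∑ i, ∑ j, ω i j with hE
  set v : Fin (n + 1) → ℝ := ∑ i, α i • C i with hv
  have h1 : mink v v = ∑ i, ∑ j, α i * α j * mink (C i) (C j) := by
    rw [hv, mink_sum_smul_left]
    refine Finset.sum_congr rfl fun i _ => ?_
    rw [mink_sum_smul_right, Finset.mul_sum]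
    exact Finset.sum_congr rfl fun j _ => by ring
  have h2 : (0 : ℝ) = ∑ i, ∑ j, α i * α j * mink (P i) (P j) := by
    have : mink (∑ i, α i • P i) (∑ i, α i • P i) = 0 := by rw [hP, mink_zero_left]
    rw [mink_sum_smul_left] at this
    rw [← this]
    refine Finset.sum_congr rfl fun i _ => ?_
    rw [mink_sum_smul_right, Finset.mul_sum]
    exact Finset.sum_congr rfl fun j _ => by ring
  have hEv : E = mink v v := by
    have : E = (∑ i, ∑ j, α i * α j * mink (C i) (C j))
        - (∑ i, ∑ j, α i * α j * mink (P i) (P j)) := by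
      rw [hE, ← Finset.sum_sub_distrib]
      refine Finset.sum_congr rfl fun i _ => ?_
      rw [← Finset.sum_sub_distrib]
      exact Finset.sum_congr rfl fun j _ => by rw [hω]; ring
    rw [this, ← h1, ← h2, sub_zero]
  have hEnn : (0 : ℝ) ≤ E := by
    refine Finset.sum_nonneg fun i _ => Finset.sum_nonneg fun j _ => hsign i j
  have hterm : ∀ i j, ω i j ≤ E := by
    intro i j
    have ha : ω i j ≤ ∑ j', ω i j' :=
      Finset.single_le_sum (fun k _ => hsign i k) (Finset.mem_univ j)
    have hb : (∑ j', ω i j') ≤ E := by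
      refine Finset.single_le_sum (f := fun i' => ∑ j', ω i' j')
        (fun k _ => Finset.sum_nonneg fun j' _ => hsign k j') (Finset.mem_univ i)
    linarith
  have hrow : ∀ i, mink (C i) v = ∑ j, α j * (mink (C i) (C j) - mink (P i) (P j)) := by
    intro i
    have hP0 : (0 : ℝ) = ∑ j, α j * mink (P i) (P j) := by
      have h : mink (P i) (∑ j, α j • P j) = 0 := by rw [hP, mink_zero_right]
      rw [mink_sum_smul_right] at h; exact h.symm
    have hsplit : ∑ j, α j * (mink (C i) (C j) - mink (P i) (P j))
        = (∑ j, α j * mink (C i) (C j)) - ∑ j, α j * mink (P i) (P j) := by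
      rw [← Finset.sum_sub_distrib]
      exact Finset.sum_congr rfl fun j _ => by ring
    rw [hsplit, ← hP0, sub_zero, hv, mink_sum_smul_right]
  have hvdecomp : v = ∑ i, (α i - β i) • C i := by
    rw [hv]; simp only [sub_smul]; rw [Finset.sum_sub_distrib, hC, sub_zero]
  have hEsum : E = ∑ i, (α i - β i) * mink (C i) v := by
    calc E = mink (∑ i, (α i - β i) • C i) v := by rw [hEv, ← hvdecomp]
      _ = ∑ i, (α i - β i) * mink (C i) v := mink_sum_smul_left _ _ _
  have hEsum2 : E = ∑ i, ∑ j, ((α i - β i) / α i) * ω i j := by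
    rw [hEsum]
    refine Finset.sum_congr rfl fun i _ => ?_
    rw [hrow i, Finset.mul_sum]
    refine Finset.sum_congr rfl fun j _ => ?_
    have hai := hα i
    rw [hω]; field_simp
  have hbound : E ≤ ((∑ i, |β i - α i| / |α i|) * (n + 2)) * E := by
    have step : E ≤ ∑ i, ∑ _j : Fin (n + 2), (|β i - α i| / |α i|) * E := by
      calc E = ∑ i, ∑ j, ((α i - β i) / α i) * ω i j := hEsum2
        _ ≤ ∑ i, ∑ _j : Fin (n + 2), (|β i - α i| / |α i|) * E := by
          refine Finset.sum_le_sum fun i _ => Finset.sum_le_sum fun j _ => ?_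
          have h1 : ((α i - β i) / α i) * ω i j ≤ |(α i - β i) / α i| * ω i j :=
            mul_le_mul_of_nonneg_right (le_abs_self _) (hsign i j)
          have h2 : |(α i - β i) / α i| * ω i j ≤ |(α i - β i) / α i| * E :=
            mul_le_mul_of_nonneg_left (hterm i j) (abs_nonneg _)
          have h3 : |(α i - β i) / α i| = |β i - α i| / |α i| := by
            rw [abs_div, abs_sub_comm]
          rw [h3] at h1 h2
          linarith
    have heq : ((∑ i, |β i - α i| / |α i|) * (n + 2)) * E
        = ∑ i, ∑ _j : Fin (n + 2), (|β i - α i| / |α i|) * E := by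
      rw [Finset.sum_mul, Finset.sum_mul]
      refine Finset.sum_congr rfl fun i _ => ?_
      simp only [Finset.sum_const, Finset.card_univ, Fintype.card_fin, nsmul_eq_mul]
      push_cast; ring
    linarith
  have hE0 : E = 0 := by
    rcases lt_or_eq_of_le hEnn with hpos | h
    · exfalso
      have := mul_lt_mul_of_pos_right hsmall hpos
      rw [one_mul] at this
      linarith
    · exact h.symm
  intro i j
  have h0 : ω i j = 0 := le_antisymm (hE0 ▸ hterm i j) (hsign i j)
  have hαij : α i * α j ≠ 0 := mul_ne_zero (hα i) (hα j)
  rcases mul_eq_zero.mp h0 with h | h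
  · exact absurd h hαij
  · exact sub_eq_zero.mp h

lemma mink_continuous {m : ℕ} :
    Continuous (fun p : (Fin (m + 1) → ℝ) × (Fin (m + 1) → ℝ) => mink p.1 p.2) := by
  unfold mink
  refine continuous_finset_sum _ fun i _ => ?_
  have h1 : Continuous (fun p : (Fin (m + 1) → ℝ) × (Fin (m + 1) → ℝ) => p.1 i * p.2 i) :=
    ((continuous_apply i).comp continuous_fst).mul ((continuous_apply i).comp continuous_snd)
  by_cases h : i = 0
  · subst h; exact h1.neg.congr (fun p => by simp)
  · simpa [if_neg h] using h1

lemma exists_norm_bound {E F : Type*} [NormedAddCommGroup E] [NormedSpace ℝ E]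
    [NormedAddCommGroup F] [NormedSpace ℝ F] [FiniteDimensional ℝ E]
    (f : E →ₗ[ℝ] F) (hf : Function.Injective f) :
    ∃ K > 0, ∀ x, ‖x‖ ≤ K * ‖f x‖ := by
  let e := LinearEquiv.ofInjective f hf
  haveI : FiniteDimensional ℝ ↥(LinearMap.range f) := f.finiteDimensional_range
  let g : ↥(LinearMap.range f) →L[ℝ] E := LinearMap.toContinuousLinearMap e.symm.toLinearMap
  refine ⟨‖g‖ + 1, by positivity, fun x => ?_⟩
  have h1 : g (e x) = x := by
    show e.symm (e x) = x
    exact e.symm_apply_apply x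
  have h2 : ‖e x‖ = ‖f x‖ := by
    have : ((e x : ↥(LinearMap.range f)) : F) = f x := rfl
    rw [← this]
    rfl
  calc ‖x‖ = ‖g (e x)‖ := by rw [h1]
    _ ≤ ‖g‖ * ‖e x‖ := g.le_opNorm _
    _ ≤ (‖g‖ + 1) * ‖f x‖ := by
        rw [h2]
        nlinarith [norm_nonneg (f x), norm_nonneg g]

variable {n : ℕ}

lemma dep_unique (A : Fin (n + 2) → (Fin (n + 1) → ℝ))
    (hgp : ∀ s : Finset (Fin (n + 2)), s.card = n + 1 →
      LinearIndependent ℝ (fun i : ↥s => A i.1))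
    (α : Fin (n + 2) → ℝ) (hα : ∀ i, α i ≠ 0)
    (hsum : ∑ i, α i • A i = 0)
    (γ : Fin (n + 2) → ℝ) (hγ : ∑ i, γ i • A i = 0) :
    ∃ μ : ℝ, γ = μ • α := by
  classical
  set μ := γ 0 / α 0 with hμ
  refine ⟨μ, ?_⟩
  set ζ : Fin (n + 2) → ℝ := γ - μ • α with hζ
  have hζ0 : ζ 0 = 0 := by
    have := hα 0
    simp only [hζ, Pi.sub_apply, Pi.smul_apply, smul_eq_mul, hμ]
    field_simp
    ring
  have hζsum : ∑ i, ζ i • A i = 0 := by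
    have : ∀ i, ζ i • A i = γ i • A i - μ • (α i • A i) := by
      intro i
      simp only [hζ, Pi.sub_apply, Pi.smul_apply, smul_eq_mul, sub_smul, mul_smul]
    simp only [this]
    rw [Finset.sum_sub_distrib, hγ, ← Finset.smul_sum, hsum, smul_zero, sub_zero]
  set s : Finset (Fin (n + 2)) := Finset.univ.erase 0 with hs
  have hcard : s.card = n + 1 := by
    rw [hs, Finset.card_erase_of_mem (Finset.mem_univ _), Finset.card_univ, Fintype.card_fin]
    omega
  have hli := hgp s hcard
  have hsum2 : ∑ i : ↥s, ζ i.1 • A i.1 = 0 := by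
    rw [Finset.sum_coe_sort s (fun i => ζ i • A i)]
    rw [hs, Finset.sum_erase _ (by rw [hζ0, zero_smul])]
    exact hζsum
  have hz := Fintype.linearIndependent_iff.mp hli (fun i => ζ i.1) hsum2
  have hzero : ζ = 0 := by
    funext i
    by_cases h : i = 0
    · rw [h]; exact hζ0
    · exact hz ⟨i, by simp [hs, h]⟩
  have : γ - μ • α = 0 := hzero
  funext i
  have := congrFun this i
  simp only [Pi.sub_apply, Pi.zero_apply, sub_eq_zero] at this
  exact this

lemma mink_nondeg (A : Fin (n + 2) → (Fin (n + 1) → ℝ))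
    (hgp : ∀ s : Finset (Fin (n + 2)), s.card = n + 1 →
      LinearIndependent ℝ (fun i : ↥s => A i.1))
    (w : Fin (n + 1) → ℝ) (hw : ∀ j, mink w (A j) = 0) : w = 0 := by
  classical
  set s : Finset (Fin (n + 2)) := Finset.univ.erase 0 with hs
  have hcard : s.card = n + 1 := by
    rw [hs, Finset.card_erase_of_mem (Finset.mem_univ _), Finset.card_univ, Fintype.card_fin]
    omega
  have hli := hgp s hcard
  haveI : Nonempty ↥s := by
    have : 0 < s.card := by omega
    obtain ⟨x, hx⟩ := Finset.card_pos.mp this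
    exact ⟨⟨x, hx⟩⟩
  have hspan : Submodule.span ℝ (Set.range (fun i : ↥s => A i.1)) = ⊤ :=
    hli.span_eq_top_of_card_eq_finrank
      (by rw [Fintype.card_coe, hcard, Module.finrank_fin_fun])
  have hker : ∀ x : Fin (n + 1) → ℝ, mink w x = 0 := by
    intro x
    have hx : x ∈ Submodule.span ℝ (Set.range (fun i : ↥s => A i.1)) := by
      rw [hspan]; trivial
    have hle : Submodule.span ℝ (Set.range (fun i : ↥s => A i.1)) ≤
        LinearMap.ker (minkB w) := by
      rw [Submodule.span_le]
      rintro y ⟨i, rfl⟩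
      exact hw i.1
    have := hle hx
    simpa [LinearMap.mem_ker, ← mink_eq_minkB] using this
  funext j
  have := hker (Pi.single j 1)
  rw [mink_single] at this
  by_cases h : j = 0
  · rw [h] at this ⊢; simp only [if_pos rfl] at this; simpa using this
  · rw [if_neg h] at this; simpa using this

lemma local_rigid (α : Fin (n + 2) → ℝ) (hα : ∀ i, α i ≠ 0)
    (P : Fin (n + 2) → (Fin (n + 1) → ℝ))
    (hP : ∑ i, α i • P i = 0)
    (hdep : ∀ γ : Fin (n + 2) → ℝ, ∑ i, γ i • P i = 0 → ∃ μ : ℝ, γ = μ • α) :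
    ∃ η > 0, ∀ C : Fin (n + 2) → (Fin (n + 1) → ℝ),
      (∀ i, ‖C i - P i‖ ≤ η) →
      (∀ i j, 0 ≤ α i * α j * (mink (C i) (C j) - mink (P i) (P j))) →
      ∀ i j, mink (C i) (C j) = mink (P i) (P j) := by
  classical
  have hαα : (0 : ℝ) < ∑ i, α i * α i :=
    Finset.sum_pos (fun i _ => mul_self_pos.mpr (hα i)) Finset.univ_nonempty
  let N : (Fin (n + 2) → ℝ) →ₗ[ℝ] ((Fin (n + 1) → ℝ) × ℝ) :=
    { toFun := fun γ => (∑ i, γ i • P i, ∑ i, γ i * α i)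
      map_add' := by
        intro γ γ'
        simp only [Pi.add_apply, add_smul, add_mul, Finset.sum_add_distrib, Prod.mk_add_mk]
      map_smul' := by
        intro c γ
        have h1 : ∑ i, (c • γ) i • P i = c • ∑ i, γ i • P i := by
          rw [Finset.smul_sum]
          exact Finset.sum_congr rfl fun i _ => by simp [mul_smul]
        have h2 : ∑ i, (c • γ) i * α i = c * ∑ i, γ i * α i := by
          rw [Finset.mul_sum]
          exact Finset.sum_congr rfl fun i _ => by simp [mul_assoc]
        simp only [RingHom.id_apply, Prod.smul_mk, Prod.mk.injEq]
        exact ⟨h1, by rw [h2]; rfl⟩ }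
  have hNinj : Function.Injective N := by
    rw [← LinearMap.ker_eq_bot]
    rw [Submodule.eq_bot_iff]
    intro γ hγ
    rw [LinearMap.mem_ker] at hγ
    have h1 : ∑ i, γ i • P i = 0 := congrArg Prod.fst hγ
    have h2 : ∑ i, γ i * α i = 0 := congrArg Prod.snd hγ
    obtain ⟨μ, rfl⟩ := hdep γ h1
    have h3 : μ * ∑ i, α i * α i = 0 := by
      rw [Finset.mul_sum, ← h2]
      exact Finset.sum_congr rfl fun i _ => by simp [mul_assoc]
    rcases mul_eq_zero.mp h3 with h | h
    · rw [h, zero_smul]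
    · exact absurd h (ne_of_gt hαα)
  obtain ⟨K, hKpos, hKb⟩ := exists_norm_bound N hNinj
  set K2 : ℝ := K * (n + 2) with hK2
  have hK2pos : (0 : ℝ) < K2 := by positivity
  set a : ℝ := ‖α‖ with ha
  have hapos : 0 < a := by
    rw [ha, norm_pos_iff]
    intro h
    exact hα 0 (by rw [h]; rfl)
  set S : ℝ := ∑ i, 1 / |α i| with hS
  have hSpos : 0 < S :=
    Finset.sum_pos (fun i _ => by
      have := abs_pos.mpr (hα i); positivity) Finset.univ_nonempty
  have hn2 : (0 : ℝ) < (n : ℝ) + 2 := by positivity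
  have hη1pos : (0 : ℝ) < 1 / (2 * K2) := one_div_pos.mpr (by linarith)
  have hDpos : (0 : ℝ) < 4 * K2 * (a + 1) * (S + 1) * ((n : ℝ) + 2) :=
    mul_pos (mul_pos (mul_pos (mul_pos (by norm_num : (0:ℝ) < 4) hK2pos)
      (by linarith : (0:ℝ) < a + 1)) (by linarith : (0:ℝ) < S + 1)) hn2
  refine ⟨min (1 / (2 * K2)) (1 / (4 * K2 * (a + 1) * (S + 1) * (n + 2))),
    lt_min hη1pos (one_div_pos.mpr hDpos), fun C hclose hsign => ?_⟩
  set η : ℝ := min (1 / (2 * K2)) (1 / (4 * K2 * (a + 1) * (S + 1) * (n + 2))) with hηdef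
  have hηpos : 0 < η := lt_min hη1pos (one_div_pos.mpr hDpos)
  -- a dependency of C
  have hnli : ¬ LinearIndependent ℝ C := by
    intro h
    have := h.fintype_card_le_finrank
    rw [Module.finrank_fin_fun, Fintype.card_fin] at this
    omega
  obtain ⟨g, hgsum, i0, hgi0⟩ := Fintype.not_linearIndependent_iff.mp hnli
  have hgne : g ≠ 0 := fun h => hgi0 (by rw [h]; rfl)
  have hgn : ‖g‖ ≠ 0 := norm_ne_zero_iff.mpr hgne
  set b : Fin (n + 2) → ℝ := ‖g‖⁻¹ • g with hb
  have hbnorm : ‖b‖ = 1 := by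
    rw [hb, norm_smul, norm_inv, norm_norm, inv_mul_cancel₀ hgn]
  have hbsum : ∑ i, b i • C i = 0 := by
    have : ∀ i, b i • C i = ‖g‖⁻¹ • (g i • C i) := by
      intro i; rw [hb]; simp [mul_smul]
    simp only [this, ← Finset.smul_sum, hgsum, smul_zero]
  set lam : ℝ := (∑ i, b i * α i) / (∑ i, α i * α i) with hlam
  set δ : Fin (n + 2) → ℝ := b - lam • α with hδ
  have hδ1 : ∑ i, δ i • P i = ∑ i, b i • (P i - C i) := by
    have e1 : ∑ i, δ i • P i = ∑ i, b i • P i - lam • ∑ i, α i • P i := by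
      rw [Finset.smul_sum, ← Finset.sum_sub_distrib]
      refine Finset.sum_congr rfl fun i _ => ?_
      rw [hδ]; simp [sub_smul, mul_smul]
    have e2 : ∑ i, b i • (P i - C i) = ∑ i, b i • P i - ∑ i, b i • C i := by
      rw [← Finset.sum_sub_distrib]
      exact Finset.sum_congr rfl fun i _ => smul_sub _ _ _
    rw [e1, hP, smul_zero, sub_zero, e2, hbsum, sub_zero]
  have hδ2 : ∑ i, δ i * α i = 0 := by
    have e1 : ∑ i, δ i * α i = (∑ i, b i * α i) - lam * ∑ i, α i * α i := by
      rw [Finset.mul_sum, ← Finset.sum_sub_distrib]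
      refine Finset.sum_congr rfl fun i _ => ?_
      rw [hδ]; simp only [Pi.sub_apply, Pi.smul_apply, smul_eq_mul]; ring
    rw [e1, hlam, div_mul_cancel₀ _ (ne_of_gt hαα), sub_self]
  have hNδ : ‖δ‖ ≤ K2 * η := by
    have h1 : ‖δ‖ ≤ K * ‖N δ‖ := hKb δ
    have h2 : N δ = (∑ i, b i • (P i - C i), 0) := by
      show (∑ i, δ i • P i, ∑ i, δ i * α i) = _
      rw [hδ1, hδ2]
    have h3 : ‖N δ‖ = ‖∑ i, b i • (P i - C i)‖ := by
      rw [h2, Prod.norm_def]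
      simp only [norm_zero]
      exact max_eq_left (norm_nonneg _)
    have h4 : ‖∑ i, b i • (P i - C i)‖ ≤ (n + 2) * η := by
      calc ‖∑ i, b i • (P i - C i)‖ ≤ ∑ i, ‖b i • (P i - C i)‖ := norm_sum_le _ _
        _ ≤ ∑ _i : Fin (n + 2), η := by
            refine Finset.sum_le_sum fun i _ => ?_
            rw [norm_smul]
            have hb1 : ‖b i‖ ≤ 1 := hbnorm ▸ norm_le_pi_norm b i
            have hc : ‖P i - C i‖ ≤ η := by rw [norm_sub_rev]; exact hclose i
            calc ‖b i‖ * ‖P i - C i‖ ≤ 1 * η :=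
                  mul_le_mul hb1 hc (norm_nonneg _) zero_le_one
              _ = η := one_mul η
        _ = (n + 2) * η := by
            rw [Finset.sum_const, Finset.card_univ, Fintype.card_fin, nsmul_eq_mul]
            push_cast; ring
    calc ‖δ‖ ≤ K * ‖N δ‖ := h1
      _ = K * ‖∑ i, b i • (P i - C i)‖ := by rw [h3]
      _ ≤ K * ((n + 2) * η) := mul_le_mul_of_nonneg_left h4 hKpos.le
      _ = K2 * η := by rw [hK2]; ring
  have hδhalf : ‖δ‖ ≤ 1 / 2 := by
    have h1 : K2 * η ≤ K2 * (1 / (2 * K2)) :=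
      mul_le_mul_of_nonneg_left (min_le_left _ _) hK2pos.le
    have h2 : K2 * (1 / (2 * K2)) = 1 / 2 := by
      field_simp
    linarith
  have hlamlow : 1 / 2 ≤ |lam| * a := by
    have h1 : ‖b - δ‖ = |lam| * a := by
      have hx : b - δ = lam • α := by rw [hδ]; abel
      rw [hx, norm_smul, Real.norm_eq_abs, ha]
    have h2 : ‖b‖ - ‖δ‖ ≤ ‖b - δ‖ := norm_sub_norm_le b δ
    rw [hbnorm] at h2
    linarith
  have hlamne : lam ≠ 0 := by
    intro h
    rw [h, abs_zero, zero_mul] at hlamlow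
    linarith
  have hlampos : 0 < |lam| := abs_pos.mpr hlamne
  set β : Fin (n + 2) → ℝ := lam⁻¹ • b with hβ
  have hβsum : ∑ i, β i • C i = 0 := by
    have e : ∀ i, β i • C i = lam⁻¹ • (b i • C i) := fun i => by
      rw [hβ]; simp [mul_smul]
    simp only [e, ← Finset.smul_sum, hbsum, smul_zero]
  have hβα : β - α = lam⁻¹ • δ := by
    have hx : lam⁻¹ • (lam • α) = α := inv_smul_smul₀ hlamne α
    rw [hβ, hδ, smul_sub, hx]
  have hβnorm : ‖β - α‖ ≤ 2 * a * ‖δ‖ := by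
    rw [hβα, norm_smul, Real.norm_eq_abs, abs_inv]
    have hinv : |lam|⁻¹ ≤ 2 * a := by
      rw [inv_eq_one_div, div_le_iff₀ hlampos]
      nlinarith
    calc |lam|⁻¹ * ‖δ‖ ≤ (2 * a) * ‖δ‖ :=
          mul_le_mul_of_nonneg_right hinv (norm_nonneg _)
      _ = 2 * a * ‖δ‖ := by ring
  have hsmall : (∑ i, |β i - α i| / |α i|) * (n + 2) < 1 := by
    have h1 : (∑ i, |β i - α i| / |α i|) ≤ ‖β - α‖ * S := by
      rw [hS, Finset.mul_sum]
      refine Finset.sum_le_sum fun i _ => ?_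
      have hle : |β i - α i| ≤ ‖β - α‖ := by
        have h := norm_le_pi_norm (β - α) i
        rwa [Pi.sub_apply, Real.norm_eq_abs] at h
      rw [mul_one_div]
      exact (div_le_div_iff_of_pos_right (abs_pos.mpr (hα i))).mpr hle
    have hβn2 : ‖β - α‖ ≤ 2 * a * (K2 * η) :=
      le_trans hβnorm (mul_le_mul_of_nonneg_left hNδ (by linarith : (0:ℝ) ≤ 2 * a))
    have hη2 : η ≤ 1 / (4 * K2 * (a + 1) * (S + 1) * (n + 2)) := min_le_right _ _
    have key : 2 * a * K2 * S * (n + 2) * η < 1 := by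
      have hprodnn : (0 : ℝ) ≤ 2 * a * K2 * S * ((n : ℝ) + 2) :=
        le_of_lt (mul_pos (mul_pos (mul_pos (mul_pos (by norm_num : (0:ℝ) < 2) hapos)
          hK2pos) hSpos) hn2)
      have h2aS : 2 * a * S < 4 * (a + 1) * (S + 1) := by nlinarith [hapos, hSpos]
      calc 2 * a * K2 * S * (n + 2) * η
          ≤ 2 * a * K2 * S * (n + 2) * (1 / (4 * K2 * (a + 1) * (S + 1) * (n + 2))) :=
            mul_le_mul_of_nonneg_left hη2 hprodnn
        _ < 1 := by
            rw [mul_one_div, div_lt_one hDpos]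
            nlinarith [mul_lt_mul_of_pos_right h2aS (mul_pos hK2pos hn2)]
    calc (∑ i, |β i - α i| / |α i|) * (n + 2)
        ≤ (‖β - α‖ * S) * (n + 2) :=
          mul_le_mul_of_nonneg_right h1 (by positivity)
      _ ≤ ((2 * a * (K2 * η)) * S) * (n + 2) :=
          mul_le_mul_of_nonneg_right (mul_le_mul_of_nonneg_right hβn2 hSpos.le) (by positivity)
      _ = 2 * a * K2 * S * (n + 2) * η := by ring
      _ < 1 := key
  exact core α β P C hα hP hβsum hsign hsmall

end MinkAux

open MinkAux in
/-- The framework `F_{n,1}` is rigid in `Hⁿ`: any continuous motion on the hyperboloid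
`Hⁿ ⊂ ℝ^{n+1}` satisfying the strut-cable constraints determined by the signs of `αᵢα_j`
preserves all the Minkowski squared distances (equivalently, all hyperbolic distances). -/
theorem F_n1_rigid_hyperbolic {n : ℕ}
    (A : Fin (n + 2) → (Fin (n + 1) → ℝ))
    (hA : ∀ i, InHyperbolic (A i))
    (hgp : ∀ s : Finset (Fin (n + 2)), s.card = n + 1 →
      LinearIndependent ℝ (fun i : ↥s => A i.1))
    (α : Fin (n + 2) → ℝ) (hα : ∀ i, α i ≠ 0)
    (hsum : ∑ i, α i • A i = 0)
    (B : Fin (n + 2) → ℝ → (Fin (n + 1) → ℝ))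
    (hBcont : ∀ i, ContinuousOn (B i) (Set.Icc 0 1))
    (hBhyp : ∀ i, ∀ t ∈ Set.Icc (0 : ℝ) 1, InHyperbolic (B i t))
    (hB0 : ∀ i, B i 0 = A i)
    (hstrut : ∀ i j, α i * α j < 0 →
      ∀ t ∈ Set.Icc (0 : ℝ) 1,
        mink (A i - A j) (A i - A j) ≤ mink (B i t - B j t) (B i t - B j t))
    (hcable : ∀ i j, 0 < α i * α j →
      ∀ t ∈ Set.Icc (0 : ℝ) 1,
        mink (B i t - B j t) (B i t - B j t) ≤ mink (A i - A j) (A i - A j)) :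
    ∀ i j, ∀ t ∈ Set.Icc (0 : ℝ) 1,
      mink (B i t - B j t) (B i t - B j t) = mink (A i - A j) (A i - A j) := by
  classical
  set I : Set ℝ := Set.Icc 0 1 with hI
  set T : Set ℝ := {t | t ∈ I ∧ ∀ i j, mink (B i t - B j t) (B i t - B j t)
      = mink (A i - A j) (A i - A j)} with hT
  suffices hsub : ∀ t ∈ I, t ∈ T by
    intro i j t ht
    have h : t ∈ I ∧ ∀ i j, mink (B i t - B j t) (B i t - B j t)
        = mink (A i - A j) (A i - A j) := hsub t ht
    exact h.2 i j
  -- closedness of T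
  have hTclosed : IsClosed T := by
    have hTeq : T = ⋂ (i : Fin (n + 2)) (j : Fin (n + 2)),
        (I ∩ (fun t => mink (B i t - B j t) (B i t - B j t)) ⁻¹'
          {mink (A i - A j) (A i - A j)}) := by
      ext t
      simp only [hT, Set.mem_setOf_eq, Set.mem_iInter, Set.mem_inter_iff, Set.mem_preimage,
        Set.mem_singleton_iff]
      constructor
      · rintro ⟨h1, h2⟩ i j; exact ⟨h1, h2 i j⟩
      · intro h
        exact ⟨(h 0 0).1, fun i j => (h i j).2⟩
    rw [hTeq]
    refine isClosed_iInter fun i => isClosed_iInter fun j => ?_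
    refine ContinuousOn.preimage_isClosed_of_isClosed ?_ isClosed_Icc isClosed_singleton
    have hsubc : ContinuousOn (fun t => B i t - B j t) I := (hBcont i).sub (hBcont j)
    exact mink_continuous.comp_continuousOn (hsubc.prodMk hsubc)
  -- 0 ∈ T
  have h0I : (0 : ℝ) ∈ I := ⟨le_refl 0, zero_le_one⟩
  have h0T : (0 : ℝ) ∈ T := by
    refine ⟨h0I, fun i j => ?_⟩
    rw [hB0 i, hB0 j]
  -- Gram transfer on T
  have hgramT : ∀ t₀, t₀ ∈ T → ∀ i j, mink (B i t₀) (B j t₀) = mink (A i) (A j) := by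
    intro t₀ ht₀ i j
    have ht₀' : t₀ ∈ I ∧ ∀ i j, mink (B i t₀ - B j t₀) (B i t₀ - B j t₀)
        = mink (A i - A j) (A i - A j) := ht₀
    have h1 := ht₀'.2 i j
    have hii := (hBhyp i t₀ ht₀'.1).1
    have hjj := (hBhyp j t₀ ht₀'.1).1
    have hAi := (hA i).1
    have hAj := (hA j).1
    have e1 := mink_expand (B i t₀) (B j t₀)
    have e2 := mink_expand (A i) (A j)
    rw [e1, e2, hii, hjj, hAi, hAj] at h1
    linarith
  have hdepA : ∀ γ : Fin (n + 2) → ℝ, ∑ i, γ i • A i = 0 → ∃ μ : ℝ, γ = μ • α :=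
    fun γ hγ => dep_unique A hgp α hα hsum γ hγ
  -- dependencies at points of T
  have hdepT : ∀ t₀, t₀ ∈ T →
      (∀ γ : Fin (n + 2) → ℝ, ∑ i, γ i • B i t₀ = 0 → ∃ μ : ℝ, γ = μ • α)
        ∧ ∑ i, α i • B i t₀ = 0 := by
    intro t₀ ht₀
    have hkey : ∀ γ : Fin (n + 2) → ℝ, ∑ i, γ i • B i t₀ = 0 → ∑ i, γ i • A i = 0 := by
      intro γ hγ
      apply mink_nondeg A hgp
      intro j
      have h1 : mink (∑ i, γ i • A i) (A j) = ∑ i, γ i * mink (A i) (A j) :=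
        mink_sum_smul_left γ A (A j)
      have h2 : mink (∑ i, γ i • B i t₀) (B j t₀) = ∑ i, γ i * mink (B i t₀) (B j t₀) :=
        mink_sum_smul_left γ (fun i => B i t₀) (B j t₀)
      rw [hγ, mink_zero_left] at h2
      rw [h1]
      calc ∑ i, γ i * mink (A i) (A j)
          = ∑ i, γ i * mink (B i t₀) (B j t₀) :=
            Finset.sum_congr rfl fun i _ => by rw [hgramT t₀ ht₀ i j]
        _ = 0 := h2.symm
    have hdep1 : ∀ γ : Fin (n + 2) → ℝ, ∑ i, γ i • B i t₀ = 0 → ∃ μ : ℝ, γ = μ • α :=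
      fun γ hγ => hdepA γ (hkey γ hγ)
    refine ⟨hdep1, ?_⟩
    have hnli : ¬ LinearIndependent ℝ (fun i => B i t₀) := by
      intro h
      have := h.fintype_card_le_finrank
      rw [Module.finrank_fin_fun, Fintype.card_fin] at this
      omega
    obtain ⟨g, hgsum, i0, hgi0⟩ := Fintype.not_linearIndependent_iff.mp hnli
    obtain ⟨μ, hμ⟩ := hdep1 g hgsum
    have hμne : μ ≠ 0 := by
      intro h
      apply hgi0
      rw [hμ, h, zero_smul]
      rfl
    have : μ • ∑ i, α i • B i t₀ = 0 := by
      rw [Finset.smul_sum, ← hgsum]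
      exact Finset.sum_congr rfl fun i _ => by rw [hμ]; simp [mul_smul]
    rcases smul_eq_zero.mp this with h | h
    · exact absurd h hμne
    · exact h
  -- openness of T in I
  have hopen : ∀ t₀, t₀ ∈ T → ∃ ε > 0, ∀ t ∈ I, dist t t₀ < ε → t ∈ T := by
    intro t₀ ht₀
    have ht₀' : t₀ ∈ I ∧ ∀ i j, mink (B i t₀ - B j t₀) (B i t₀ - B j t₀)
        = mink (A i - A j) (A i - A j) := ht₀
    obtain ⟨hdep1, hPzero⟩ := hdepT t₀ ht₀
    obtain ⟨η, hηpos, hloc⟩ := local_rigid α hα (fun i => B i t₀) hPzero hdep1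
    have hcont : ∀ i : Fin (n + 2), ∃ ε > 0, ∀ t ∈ I, dist t t₀ < ε →
        ‖B i t - B i t₀‖ ≤ η := by
      intro i
      have hct : ContinuousWithinAt (B i) I t₀ := (hBcont i) t₀ ht₀'.1
      rw [Metric.continuousWithinAt_iff] at hct
      obtain ⟨ε, hε, hh⟩ := hct η hηpos
      refine ⟨ε, hε, fun t htI hd => ?_⟩
      have := hh htI hd
      rw [dist_eq_norm] at this
      linarith
    choose ε hεpos hεprop using hcont
    refine ⟨Finset.univ.inf' Finset.univ_nonempty ε, ?_, fun t htI hd => ?_⟩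
    · rw [gt_iff_lt, Finset.lt_inf'_iff]; exact fun i _ => hεpos i
    · have hclose : ∀ i, ‖B i t - B i t₀‖ ≤ η := fun i =>
        hεprop i t htI (lt_of_lt_of_le hd (Finset.inf'_le _ (Finset.mem_univ i)))
      have hsign : ∀ i j, 0 ≤ α i * α j *
          (mink (B i t) (B j t) - mink ((fun i => B i t₀) i) ((fun i => B i t₀) j)) := by
        intro i j
        simp only
        by_cases hij : i = j
        · subst hij
          rw [(hBhyp i t htI).1, (hBhyp i t₀ ht₀'.1).1, sub_self, mul_zero]
        · have e1 := mink_expand (B i t) (B j t)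
          have e3 := mink_expand (B i t₀) (B j t₀)
          have e2 := mink_expand (A i) (A j)
          have n1 := (hBhyp i t htI).1
          have n2 := (hBhyp j t htI).1
          have n3 := (hBhyp i t₀ ht₀'.1).1
          have n4 := (hBhyp j t₀ ht₀'.1).1
          have n5 := (hA i).1
          have n6 := (hA j).1
          have heq := ht₀'.2 i j
          rcases lt_trichotomy (α i * α j) 0 with hlt | hzero | hgt
          · have hs := hstrut i j hlt t htI
            have hΔ : mink (B i t) (B j t) - mink (B i t₀) (B j t₀) ≤ 0 := by
              rw [e1, e2] at hs
              rw [e3, e2] at heq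
              rw [n1, n2, n3, n4, n5, n6] at *
              linarith
            have : α i * α j * (mink (B i t) (B j t) - mink (B i t₀) (B j t₀))
                = (-(α i * α j)) * (-(mink (B i t) (B j t) - mink (B i t₀) (B j t₀))) := by
              ring
            rw [this]
            exact mul_nonneg (by linarith) (by linarith)
          · exact absurd hzero (mul_ne_zero (hα i) (hα j))
          · have hs := hcable i j hgt t htI
            have hΔ : 0 ≤ mink (B i t) (B j t) - mink (B i t₀) (B j t₀) := by
              rw [e1, e2] at hs
              rw [e3, e2] at heq
              rw [n1, n2, n3, n4, n5, n6] at *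
              linarith
            exact mul_nonneg hgt.le hΔ
      have hfin := hloc (fun i => B i t) hclose hsign
      refine ⟨htI, fun i j => ?_⟩
      have h1 : mink (B i t) (B j t) = mink (B i t₀) (B j t₀) := hfin i j
      have e1 := mink_expand (B i t) (B j t)
      have e3 := mink_expand (B i t₀) (B j t₀)
      have e2 := mink_expand (A i) (A j)
      have n1 := (hBhyp i t htI).1
      have n2 := (hBhyp j t htI).1
      have n3 := (hBhyp i t₀ ht₀'.1).1
      have n4 := (hBhyp j t₀ ht₀'.1).1
      have heq := ht₀'.2 i j
      rw [e1, e3] at *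
      rw [n1, n2, n3, n4] at *
      linarith
  -- preconnectedness argument
  intro t ht
  by_contra htT
  have hchoice : ∀ t₀ : ℝ, ∃ ε : ℝ, 0 < ε ∧ (t₀ ∈ T → ∀ s ∈ I, dist s t₀ < ε → s ∈ T) := by
    intro t₀
    by_cases h : t₀ ∈ T
    · obtain ⟨ε, hε, hp⟩ := hopen t₀ h
      exact ⟨ε, hε, fun _ => hp⟩
    · exact ⟨1, one_pos, fun hc => absurd hc h⟩
  choose ε hεpos hεp using hchoice
  set U : Set ℝ := ⋃ t₀ ∈ T, Metric.ball t₀ (ε t₀) with hU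
  have hUopen : IsOpen U := isOpen_biUnion fun t₀ _ => Metric.isOpen_ball
  have hTU : T ⊆ U := fun t₀ ht₀ => Set.mem_biUnion ht₀ (Metric.mem_ball_self (hεpos t₀))
  have hIU : I ∩ U ⊆ T := by
    rintro s ⟨hsI, hsU⟩
    rw [hU] at hsU
    obtain ⟨t₀, ht₀T, hball⟩ := Set.mem_iUnion₂.mp hsU
    exact hεp t₀ ht₀T s hsI (by rwa [Metric.mem_ball] at hball)
  have hpc : IsPreconnected I := isPreconnected_Icc
  have hres := hpc U Tᶜ hUopen hTclosed.isOpen_compl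
    (by
      intro x hx
      by_cases hxT : x ∈ T
      · exact Or.inl (hTU hxT)
      · exact Or.inr hxT)
    ⟨0, h0I, hTU h0T⟩
    ⟨t, ht, htT⟩
  obtain ⟨x, hxI, hxU, hxTc⟩ := hres
  exact hxTc (hIU ⟨hxI, hxU⟩)
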